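/- For all 1 ≤ i < j ≤ k, r_{i,j} ∈ {0, 1, 2}. Equivalently: if there exists X ∈ h(0,0,C) with p_{i,j}(X) ≠ 0, then there exists X ∈ h(0,0,C) with p_{i,j}(X) ≠ 0 and rank p_{i,j}(X) ≤ 2. -/

import Mathlib

open scoped Classical

noncomputable section

namespace Paper

attribute [local instance 100] LieRing.ofAssociativeRing

variable {F : Type*}

/-- Offset (starting global index) of the `i`-th block. -/
def off {k : ℕ} (dv : Fin k → ℕ) (i : Fin k) : ℕ := ∑ t ∈ Finset.Iio i, dv t

/-- Total size `d = d₁ + ⋯ + d_k`. -/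
def dtot {k : ℕ} (dv : Fin k → ℕ) : ℕ := ∑ t, dv t

theorem off_add_lt {k : ℕ} (dv : Fin k → ℕ) (i : Fin k) (r : Fin (dv i)) :
    off dv i + (r : ℕ) < dtot dv := by
  have h1 : off dv i + dv i ≤ dtot dv := by
    have h : off dv i + dv i = ∑ t ∈ insert i (Finset.Iio i), dv t := by
      rw [Finset.sum_insert (by simp), add_comm]
      rfl
    rw [h]
    exact Finset.sum_le_sum_of_subset (Finset.subset_univ _)
  have := r.isLt
  omega

/-- The global index of the `r`-th row/column of the `i`-th block. -/
def emb {k : ℕ} (dv : Fin k → ℕ) (i : Fin k) (r : Fin (dv i)) : Fin (dtot dv) :=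
  ⟨off dv i + r, off_add_lt dv i r⟩

/-- The projection `p_{i,j}` onto the `(i,j)`-block. -/
def blk {k : ℕ} (dv : Fin k → ℕ) (i j : Fin k)
    (A : Matrix (Fin (dtot dv)) (Fin (dtot dv)) F) :
    Matrix (Fin (dv i)) (Fin (dv j)) F :=
  Matrix.of fun r s => A (emb dv i r) (emb dv j s)

/-- The `p × p` upper triangular Jordan block `J^p(α)`. -/
def Jord [Field F] (p : ℕ) (α : F) : Matrix (Fin p) (Fin p) F :=
  Matrix.of fun a b =>
    if (b : ℕ) = (a : ℕ) then α else if (b : ℕ) = (a : ℕ) + 1 then 1 else 0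

/-- The matrix whose `(i,j)` block is `M` and all other blocks vanish. -/
def embMat [Field F] {k : ℕ} (dv : Fin k → ℕ) (i j : Fin k)
    (M : Matrix (Fin (dv i)) (Fin (dv j)) F) :
    Matrix (Fin (dtot dv)) (Fin (dtot dv)) F :=
  Matrix.of fun x y => ∑ r, ∑ s, if x = emb dv i r ∧ y = emb dv j s then M r s else 0

/-- The block diagonal matrix `D(α,λ) = J^{d₁}(α) ⊕ J^{d₂}(α-λ) ⊕ ⋯ ⊕ J^{d_k}(α-(k-1)λ)`. -/
def Dmat [Field F] {k : ℕ} (dv : Fin k → ℕ) (α lam : F) :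
    Matrix (Fin (dtot dv)) (Fin (dtot dv)) F :=
  ∑ i : Fin k, embMat dv i i (Jord (dv i) (α - ((i : ℕ) : F) * lam))

/-- `A` is the matrix `E(S)` of an admissible sequence `S`:  all blocks vanish except the
blocks `p_{i,i+1}`, and each block `p_{i,i+1}` has nonzero lower-left (i.e. `(dᵢ,1)`) entry. -/
def IsEShaped [Field F] {k : ℕ} (dv : Fin k → ℕ)
    (A : Matrix (Fin (dtot dv)) (Fin (dtot dv)) F) : Prop :=
  (∀ i j : Fin k, (j : ℕ) ≠ (i : ℕ) + 1 → blk dv i j A = 0) ∧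
  (∀ i j : Fin k, (j : ℕ) = (i : ℕ) + 1 →
    ∀ (hr : dv i - 1 < dv i) (hs : 0 < dv j),
      A (emb dv i ⟨dv i - 1, hr⟩) (emb dv j ⟨0, hs⟩) ≠ 0)

/-- The matrix `E(C)` of the canonical sequence `C`. -/
def CanE (F : Type*) [Field F] {k : ℕ} (dv : Fin k → ℕ) :
    Matrix (Fin (dtot dv)) (Fin (dtot dv)) F :=
  Matrix.of fun x y =>
    if ∃ i j : Fin k, (j : ℕ) = (i : ℕ) + 1 ∧
        (x : ℕ) = off dv i + (dv i - 1) ∧ (y : ℕ) = off dv j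
    then 1 else 0

/-- The Lie subalgebra `h(α,λ,S)` of `gl(d,F)` generated by `D(α,λ)` and `E(S) = A`. -/
def hAlg (F : Type*) [Field F] {k : ℕ} (dv : Fin k → ℕ) (α lam : F)
    (A : Matrix (Fin (dtot dv)) (Fin (dtot dv)) F) :
    LieSubalgebra F (Matrix (Fin (dtot dv)) (Fin (dtot dv)) F) :=
  LieSubalgebra.lieSpan F _ {Dmat dv α lam, A}

/-- The Lie subalgebra `n(S)` generated by the matrices `(ad D(0,0))^l (E(S))`, `l ≥ 0`. -/
def nAlg (F : Type*) [Field F] {k : ℕ} (dv : Fin k → ℕ)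
    (A : Matrix (Fin (dtot dv)) (Fin (dtot dv)) F) :
    LieSubalgebra F (Matrix (Fin (dtot dv)) (Fin (dtot dv)) F) :=
  LieSubalgebra.lieSpan F _ {X | ∃ l : ℕ, X = (fun Y => ⁅Dmat dv (0 : F) 0, Y⁆)^[l] A}

/-- `r_{i,j}`:  `0` if the `(i,j)`-blocks of all members of `h(0,0,C)` vanish, and otherwise
the minimal rank of a nonzero `(i,j)`-block of a member of `h(0,0,C)`. -/
def rr (F : Type*) [Field F] {k : ℕ} (dv : Fin k → ℕ) (i j : Fin k) : ℕ :=
  if ∀ X ∈ hAlg F dv 0 0 (CanE F dv), blk dv i j X = 0 then 0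
  else sInf {n | ∃ X ∈ hAlg F dv 0 0 (CanE F dv),
    blk dv i j X ≠ 0 ∧ (blk dv i j X).rank = n}

/-- The automorphism `φ(A)_{i,j} = (−1)^{i−j+1} A_{d+1−j,d+1−i}` (here written 0-indexed). -/
def Phi (F : Type*) [Field F] (d : ℕ) (A : Matrix (Fin d) (Fin d) F) :
    Matrix (Fin d) (Fin d) F :=
  Matrix.of fun x y =>
    (-1 : F) ^ ((x : ℕ) + (y : ℕ) + 1) *
      A ⟨d - 1 - (y : ℕ), by have := y.isLt; omega⟩ ⟨d - 1 - (x : ℕ), by have := x.isLt; omega⟩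

/-- `d⃗` is symmetric: `dᵢ = d_{k+1−i}` for all `i` (0-indexed: `dᵢ = d_{k-1-i}`). -/
def SymmSeq {k : ℕ} (dv : Fin k → ℕ) : Prop :=
  ∀ i j : Fin k, (i : ℕ) + (j : ℕ) = k - 1 → dv i = dv j

/-- `d⃗` is odd-symmetric: symmetric, `k` odd and the middle `d_{(k+1)/2}` odd. -/
def OddSymmSeq {k : ℕ} (dv : Fin k → ℕ) : Prop :=
  SymmSeq dv ∧ Odd k ∧ ∀ i : Fin k, 2 * (i : ℕ) = k - 1 → Odd (dv i)

/-- Conditions (1) and (2) of Definition `Normalized` (weak normalization), expressed on the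
matrix `A = E(S)`, so that `S(i)_{a,b} = A (emb i a) (emb (i+1) b)` (0-indexed). -/
def IsWeaklyNormalized [Field F] {k : ℕ} (dv : Fin k → ℕ)
    (A : Matrix (Fin (dtot dv)) (Fin (dtot dv)) F) : Prop :=
  (∀ i j : Fin k, (j : ℕ) = (i : ℕ) + 1 →
      ∀ (hr : dv i - 1 < dv i) (hs : 0 < dv j),
        A (emb dv i ⟨dv i - 1, hr⟩) (emb dv j ⟨0, hs⟩) = 1) ∧
  (∀ i j l : Fin k, (j : ℕ) = (i : ℕ) + 1 → (l : ℕ) = (j : ℕ) + 1 →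
      ∀ (hr : dv i - 1 < dv i) (s : Fin (dv j)) (hs : dv j - 1 - (s : ℕ) < dv j)
        (h0 : 0 < dv l),
        A (emb dv i ⟨dv i - 1, hr⟩) (emb dv j s) =
          A (emb dv j ⟨dv j - 1 - (s : ℕ), hs⟩) (emb dv l ⟨0, h0⟩))

/-- The sequence `S` (given through its matrix `A = E(S)`) is normalized. -/
def IsNormalized [Field F] {k : ℕ} (dv : Fin k → ℕ)
    (A : Matrix (Fin (dtot dv)) (Fin (dtot dv)) F) : Prop :=
  IsWeaklyNormalized dv A ∧
  (∀ i j : Fin k, (i : ℕ) = 0 → (j : ℕ) = 1 →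
      ∀ (r : Fin (dv i)) (hs : 0 < dv j), (r : ℕ) ≠ dv i - 1 →
        A (emb dv i r) (emb dv j ⟨0, hs⟩) = 0) ∧
  (∀ i j : Fin k, (j : ℕ) = (i : ℕ) + 1 → (j : ℕ) = k - 1 →
      ∀ (hr : dv i - 1 < dv i) (s : Fin (dv j)), (s : ℕ) ≠ 0 →
        A (emb dv i ⟨dv i - 1, hr⟩) (emb dv j s) = 0)

/-- Membership in the group `G(d⃗)`: a block diagonal matrix each of whose diagonal blocks is
a polynomial with nonzero constant term evaluated at `J^{dᵢ}(0)`. -/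
def InG (F : Type*) [Field F] {k : ℕ} (dv : Fin k → ℕ)
    (P : Matrix (Fin (dtot dv)) (Fin (dtot dv)) F) : Prop :=
  IsUnit P ∧ ∃ q : Fin k → Polynomial F, (∀ i, (q i).coeff 0 ≠ 0) ∧
    P = ∑ i : Fin k, embMat dv i i (Polynomial.aeval (Jord (dv i) (0 : F)) (q i))

/-- The nilpotency degree of a Lie algebra: the least `m` with `L^m = 0` in the lower central
series `L^0 = L`, `L^{i+1} = [L, L^i]`. -/
def nilDeg (F : Type*) (L : Type*) [Field F] [LieRing L] [LieAlgebra F L] : ℕ :=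
  sInf {m | LieModule.lowerCentralSeries F L L m = ⊥}


/-! ### Auxiliary machinery -/

section Aux

variable {F : Type*} [Field F] {k : ℕ} {dv : Fin k → ℕ}

lemma off_add_le_off {i j : Fin k} (h : i < j) : off dv i + dv i ≤ off dv j := by
  have hsub : insert i (Finset.Iio i) ⊆ Finset.Iio j := by
    intro t ht
    rcases Finset.mem_insert.mp ht with rfl | ht
    · exact Finset.mem_Iio.mpr h
    · exact Finset.mem_Iio.mpr ((Finset.mem_Iio.mp ht).trans h)
  have hle : ∑ t ∈ insert i (Finset.Iio i), dv t ≤ ∑ t ∈ Finset.Iio j, dv t :=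
    Finset.sum_le_sum_of_subset hsub
  rw [Finset.sum_insert (by simp)] at hle
  unfold off
  omega

lemma blt_eq {i j : Fin k} {r s : ℕ} (hr : r < dv i) (hs : s < dv j)
    (h : off dv i + r = off dv j + s) : i = j := by
  by_contra hne
  rcases lt_or_gt_of_ne hne with hlt | hlt
  · have := off_add_le_off (dv := dv) hlt; omega
  · have := off_add_le_off (dv := dv) hlt; omega

lemma emb_inj {i j : Fin k} {r : Fin (dv i)} {s : Fin (dv j)}
    (h : emb dv i r = emb dv j s) : i = j ∧ (r : ℕ) = (s : ℕ) := by
  have hv : off dv i + (r : ℕ) = off dv j + (s : ℕ) := congrArg Fin.val h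
  have hij := blt_eq r.isLt s.isLt hv
  subst hij
  exact ⟨rfl, by omega⟩

/-- The block decomposition of `Fin (dtot dv)`. -/
def embEquiv (dv : Fin k → ℕ) : (Σ i : Fin k, Fin (dv i)) ≃ Fin (dtot dv) :=
  Equiv.ofBijective (fun p => emb dv p.1 p.2) (by
    rw [Fintype.bijective_iff_injective_and_card]
    refine ⟨?_, by simp [dtot]; exact (Fintype.card_fin _).symm⟩
    rintro ⟨i, r⟩ ⟨j, s⟩ h
    obtain ⟨rfl, hrs⟩ := emb_inj h
    simp only [Sigma.mk.inj_iff, heq_eq_eq, true_and]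
    exact Fin.ext hrs)

lemma sum_emb {M : Type*} [AddCommMonoid M] (f : Fin (dtot dv) → M) :
    ∑ x, f x = ∑ i : Fin k, ∑ r : Fin (dv i), f (emb dv i r) := by
  rw [← Equiv.sum_comp (embEquiv dv) f]
  rw [← Finset.univ_sigma_univ, Finset.sum_sigma]
  rfl

lemma blk_add (i j : Fin k) (A B : Matrix (Fin (dtot dv)) (Fin (dtot dv)) F) :
    blk dv i j (A + B) = blk dv i j A + blk dv i j B := rfl

lemma blk_sub (i j : Fin k) (A B : Matrix (Fin (dtot dv)) (Fin (dtot dv)) F) :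
    blk dv i j (A - B) = blk dv i j A - blk dv i j B := rfl

lemma blk_smul (i j : Fin k) (c : F) (A : Matrix (Fin (dtot dv)) (Fin (dtot dv)) F) :
    blk dv i j (c • A) = c • blk dv i j A := rfl

lemma blk_zero (i j : Fin k) : blk dv i j (0 : Matrix (Fin (dtot dv)) (Fin (dtot dv)) F) = 0 := rfl

lemma blk_mul (i j : Fin k) (A B : Matrix (Fin (dtot dv)) (Fin (dtot dv)) F) :
    blk dv i j (A * B) = ∑ t : Fin k, blk dv i t A * blk dv t j B := by
  ext r s
  simp only [blk, Matrix.of_apply, Matrix.mul_apply, Matrix.sum_apply, Finset.sum_apply]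
  rw [sum_emb (dv := dv) (fun x => A (emb dv i r) x * B x (emb dv j s))]

lemma blk_sum {ι : Type*} (s : Finset ι) (i j : Fin k)
    (A : ι → Matrix (Fin (dtot dv)) (Fin (dtot dv)) F) :
    blk dv i j (∑ t ∈ s, A t) = ∑ t ∈ s, blk dv i j (A t) := by
  ext r u
  simp [blk, Matrix.sum_apply]

lemma blk_embMat_ne {s t i j : Fin k} (h : ¬(s = i ∧ t = j))
    (M : Matrix (Fin (dv i)) (Fin (dv j)) F) :
    blk dv s t (embMat dv i j M) = 0 := by
  ext r u
  simp only [blk, embMat, Matrix.of_apply, Matrix.zero_apply]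
  refine Finset.sum_eq_zero fun r' _ => Finset.sum_eq_zero fun s' _ => ?_
  rw [if_neg]
  rintro ⟨h1, h2⟩
  exact h ⟨(emb_inj h1).1, (emb_inj h2).1⟩

lemma blk_embMat_same (i j : Fin k) (M : Matrix (Fin (dv i)) (Fin (dv j)) F) :
    blk dv i j (embMat dv i j M) = M := by
  ext r u
  simp only [blk, embMat, Matrix.of_apply]
  refine (Finset.sum_eq_single r
    (fun r' _ hne => Finset.sum_eq_zero fun s' _ => if_neg (by
      rintro ⟨h1, -⟩; exact hne (Fin.ext (emb_inj h1).2.symm)))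
    (fun h => absurd (Finset.mem_univ _) h)).trans ?_
  refine (Finset.sum_eq_single u
    (fun s' _ hne => if_neg (by
      rintro ⟨-, h2⟩; exact hne (Fin.ext (emb_inj h2).2.symm)))
    (fun h => absurd (Finset.mem_univ _) h)).trans ?_
  exact if_pos ⟨rfl, rfl⟩

lemma Dmat_eq_sum : Dmat dv (0 : F) 0 = ∑ s : Fin k, embMat dv s s (Jord (dv s) 0) := by
  unfold Dmat
  refine Finset.sum_congr rfl fun s _ => ?_
  norm_num

lemma blk_Dmat_same (s : Fin k) : blk dv s s (Dmat dv (0 : F) 0) = Jord (dv s) 0 := by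
  rw [Dmat_eq_sum, blk_sum]
  rw [Finset.sum_eq_single s (fun t _ hne => blk_embMat_ne (by tauto) _)
    (fun h => absurd (Finset.mem_univ _) h)]
  exact blk_embMat_same _ _ _

lemma blk_Dmat_ne {s t : Fin k} (h : s ≠ t) : blk dv s t (Dmat dv (0 : F) 0) = 0 := by
  rw [Dmat_eq_sum, blk_sum]
  exact Finset.sum_eq_zero fun u _ => blk_embMat_ne (by rintro ⟨rfl, rfl⟩; exact h rfl) _

lemma blk_CanE_ne (hdv : ∀ i, 0 < dv i) {s t : Fin k} (h : (t : ℕ) ≠ (s : ℕ) + 1) :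
    blk dv s t (CanE F dv) = 0 := by
  ext r u
  simp only [blk, CanE, Matrix.of_apply, Matrix.zero_apply]
  rw [if_neg]
  rintro ⟨a, b, hab, hx, hy⟩
  have hx' : off dv s + (r : ℕ) = off dv a + (dv a - 1) := hx
  have hy' : off dv t + (u : ℕ) = off dv b + 0 := hy
  have h1 : s = a := blt_eq r.isLt (by have := hdv a; omega) hx'
  have h2 : t = b := blt_eq u.isLt (hdv b) hy'
  subst h1; subst h2
  exact h hab

lemma blk_CanE_succ (hdv : ∀ i, 0 < dv i) {s t : Fin k} (h : (t : ℕ) = (s : ℕ) + 1)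
    (r : Fin (dv s)) (u : Fin (dv t)) :
    blk dv s t (CanE F dv) r u = if (r : ℕ) = dv s - 1 ∧ (u : ℕ) = 0 then 1 else 0 := by
  simp only [blk, CanE, Matrix.of_apply]
  by_cases hc : (r : ℕ) = dv s - 1 ∧ (u : ℕ) = 0
  · rw [if_pos hc, if_pos]
    exact ⟨s, t, h, by show off dv s + (r : ℕ) = _; omega, by show off dv t + (u : ℕ) = _; omega⟩
  · rw [if_neg hc, if_neg]
    rintro ⟨a, b, hab, hx, hy⟩
    have hx' : off dv s + (r : ℕ) = off dv a + (dv a - 1) := hx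
    have hy' : off dv t + (u : ℕ) = off dv b + 0 := hy
    have h1 : s = a := blt_eq r.isLt (by have := hdv a; omega) hx'
    have h2 : t = b := blt_eq u.isLt (hdv b) hy'
    subst h1; subst h2
    exact hc ⟨by omega, by omega⟩

lemma blk_lie_D (i j : Fin k) (Z : Matrix (Fin (dtot dv)) (Fin (dtot dv)) F) :
    blk dv i j ⁅Dmat dv (0 : F) 0, Z⁆ =
      Jord (dv i) (0 : F) * blk dv i j Z - blk dv i j Z * Jord (dv j) (0 : F) := by
  rw [Ring.lie_def, blk_sub, blk_mul, blk_mul]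
  congr 1
  · rw [Finset.sum_eq_single i
      (fun t _ hne => by rw [blk_Dmat_ne (Ne.symm hne), Matrix.zero_mul])
      (fun h => absurd (Finset.mem_univ _) h), blk_Dmat_same]
  · rw [Finset.sum_eq_single j
      (fun t _ hne => by rw [blk_Dmat_ne hne, Matrix.mul_zero])
      (fun h => absurd (Finset.mem_univ _) h), blk_Dmat_same]

end Aux

section Words

variable (F : Type*) [Field F] {k : ℕ} (dv : Fin k → ℕ)

/-- The generators `(ad D)^l (E(C))`. -/
def Xw (l : ℕ) : Matrix (Fin (dtot dv)) (Fin (dtot dv)) F :=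
  (fun Y => ⁅Dmat dv (0 : F) 0, Y⁆)^[l] (CanE F dv)

lemma Xw_zero : Xw F dv 0 = CanE F dv := rfl

lemma Xw_succ (l : ℕ) : Xw F dv (l + 1) = ⁅Dmat dv (0 : F) 0, Xw F dv l⁆ :=
  Function.iterate_succ_apply' _ _ _

/-- Left-normed words in the generators `Xw`. -/
inductive IsWord : Matrix (Fin (dtot dv)) (Fin (dtot dv)) F → Prop
  | gen (l : ℕ) : IsWord (Xw F dv l)
  | pre (l : ℕ) {w : Matrix (Fin (dtot dv)) (Fin (dtot dv)) F} :
      IsWord w → IsWord ⁅Xw F dv l, w⁆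

/-- The span of left-normed words. -/
def NN : Submodule F (Matrix (Fin (dtot dv)) (Fin (dtot dv)) F) :=
  Submodule.span F {w | IsWord F dv w}

variable {F dv}

lemma lie_Xw_mem (l : ℕ) {x : Matrix (Fin (dtot dv)) (Fin (dtot dv)) F} (hx : x ∈ NN F dv) :
    ⁅Xw F dv l, x⁆ ∈ NN F dv := by
  induction hx using Submodule.span_induction with
  | mem w hw => exact Submodule.subset_span (IsWord.pre l hw)
  | zero => rw [lie_zero]; exact zero_mem _
  | add y z _ _ hy hz => rw [lie_add]; exact add_mem hy hz
  | smul c y _ hy => rw [lie_smul]; exact Submodule.smul_mem _ _ hy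

lemma lie_word_mem {w : Matrix (Fin (dtot dv)) (Fin (dtot dv)) F} (hw : IsWord F dv w) :
    ∀ x ∈ NN F dv, ⁅w, x⁆ ∈ NN F dv := by
  induction hw with
  | gen l => exact fun x hx => lie_Xw_mem l hx
  | pre l hw' ih =>
    intro x hx
    rw [lie_lie]
    exact sub_mem (lie_Xw_mem l (ih x hx)) (ih _ (lie_Xw_mem l hx))

lemma NN_lie {x y : Matrix (Fin (dtot dv)) (Fin (dtot dv)) F}
    (hx : x ∈ NN F dv) (hy : y ∈ NN F dv) : ⁅x, y⁆ ∈ NN F dv := by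
  induction hx using Submodule.span_induction with
  | mem w hw => exact lie_word_mem hw y hy
  | zero => rw [zero_lie]; exact zero_mem _
  | add a b _ _ ha hb => rw [add_lie]; exact add_mem ha hb
  | smul c a _ ha => rw [smul_lie]; exact Submodule.smul_mem _ _ ha

lemma lie_D_word {w : Matrix (Fin (dtot dv)) (Fin (dtot dv)) F} (hw : IsWord F dv w) :
    ⁅Dmat dv (0 : F) 0, w⁆ ∈ NN F dv := by
  induction hw with
  | gen l => rw [← Xw_succ]; exact Submodule.subset_span (IsWord.gen (l + 1))
  | pre l hw' ih =>
    rw [leibniz_lie, ← Xw_succ]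
    exact add_mem (Submodule.subset_span (IsWord.pre (l + 1) hw')) (lie_Xw_mem l ih)

lemma lie_D_mem {x : Matrix (Fin (dtot dv)) (Fin (dtot dv)) F} (hx : x ∈ NN F dv) :
    ⁅Dmat dv (0 : F) 0, x⁆ ∈ NN F dv := by
  induction hx using Submodule.span_induction with
  | mem w hw => exact lie_D_word hw
  | zero => rw [lie_zero]; exact zero_mem _
  | add y z _ _ hy hz => rw [lie_add]; exact add_mem hy hz
  | smul c y _ hy => rw [lie_smul]; exact Submodule.smul_mem _ _ hy

variable (F dv) in
/-- The Lie subalgebra `F·D ⊕ N`. -/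
def KK : LieSubalgebra F (Matrix (Fin (dtot dv)) (Fin (dtot dv)) F) :=
  { (Submodule.span F {Dmat dv (0 : F) 0} ⊔ NN F dv :
      Submodule F (Matrix (Fin (dtot dv)) (Fin (dtot dv)) F)) with
    lie_mem' := by
      intro x y hx hy
      obtain ⟨a, ha, b, hb, rfl⟩ := Submodule.mem_sup.mp hx
      obtain ⟨a', ha', b', hb', rfl⟩ := Submodule.mem_sup.mp hy
      obtain ⟨c, rfl⟩ := Submodule.mem_span_singleton.mp ha
      obtain ⟨c', rfl⟩ := Submodule.mem_span_singleton.mp ha'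
      have key : ⁅c • Dmat dv (0 : F) 0 + b, c' • Dmat dv (0 : F) 0 + b'⁆ =
          c • ⁅Dmat dv (0 : F) 0, b'⁆ + (c' • ⁅b, Dmat dv (0 : F) 0⁆ + ⁅b, b'⁆) := by
        simp only [Ring.lie_def]
        noncomm_ring
        module
      rw [key]
      have h3 : ⁅b, Dmat dv (0 : F) 0⁆ ∈ NN F dv := by
        rw [← lie_skew]; exact neg_mem (lie_D_mem hb)
      refine Submodule.mem_sup_right (add_mem ?_ (add_mem ?_ ?_))
      · exact Submodule.smul_mem _ _ (lie_D_mem hb')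
      · exact Submodule.smul_mem _ _ h3
      · exact NN_lie hb hb' }

lemma hAlg_le_KK : hAlg F dv 0 0 (CanE F dv) ≤ KK F dv := by
  rw [hAlg, LieSubalgebra.lieSpan_le]
  rintro x (rfl | rfl)
  · exact Submodule.mem_sup_left (Submodule.mem_span_singleton_self _)
  · exact Submodule.mem_sup_right (Submodule.subset_span (IsWord.gen 0))

lemma Dmat_mem_hAlg : Dmat dv (0 : F) 0 ∈ hAlg F dv 0 0 (CanE F dv) :=
  LieSubalgebra.subset_lieSpan (Set.mem_insert _ _)

lemma CanE_mem_hAlg : CanE F dv ∈ hAlg F dv 0 0 (CanE F dv) :=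
  LieSubalgebra.subset_lieSpan (Set.mem_insert_iff.mpr (Or.inr rfl))

lemma Xw_mem_hAlg (l : ℕ) : Xw F dv l ∈ hAlg F dv 0 0 (CanE F dv) := by
  induction l with
  | zero => exact CanE_mem_hAlg
  | succ l ih => rw [Xw_succ]; exact LieSubalgebra.lie_mem _ Dmat_mem_hAlg ih

lemma word_mem_hAlg {w : Matrix (Fin (dtot dv)) (Fin (dtot dv)) F} (hw : IsWord F dv w) :
    w ∈ hAlg F dv 0 0 (CanE F dv) := by
  induction hw with
  | gen l => exact Xw_mem_hAlg l
  | pre l hw' ih => exact LieSubalgebra.lie_mem _ (Xw_mem_hAlg l) ih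

lemma blk_Xw_ne (hdv : ∀ i, 0 < dv i) {s t : Fin k} (h : (t : ℕ) ≠ (s : ℕ) + 1) (l : ℕ) :
    blk dv s t (Xw F dv l) = 0 := by
  induction l with
  | zero => exact blk_CanE_ne hdv h
  | succ l ih => rw [Xw_succ, blk_lie_D, ih]; simp

end Words

section Core

variable {F : Type*} [Field F] {k : ℕ} {dv : Fin k → ℕ}

variable (F dv) in
/-- The map `M ↦ J_i M - M J_j` on the `(i,j)` block space. -/
def Tmap (i j : Fin k) : Module.End F (Matrix (Fin (dv i)) (Fin (dv j)) F) where
  toFun M := Jord (dv i) (0 : F) * M - M * Jord (dv j) (0 : F)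
  map_add' A B := by beta_reduce; rw [Matrix.mul_add, Matrix.add_mul]; abel
  map_smul' c A := by
    simp only [RingHom.id_apply, Matrix.mul_smul, Matrix.smul_mul, smul_sub]

variable (F dv) in
/-- The subspace generated by `T^m` images of blocks of `⁅E, Z⁆`, `Z ∈ h`. -/
def Vg (i j : Fin k) : Submodule F (Matrix (Fin (dv i)) (Fin (dv j)) F) :=
  Submodule.span F {M | ∃ (m : ℕ) (Z : Matrix (Fin (dtot dv)) (Fin (dtot dv)) F),
    Z ∈ hAlg F dv 0 0 (CanE F dv) ∧ M = (Tmap F dv i j ^ m) (blk dv i j ⁅CanE F dv, Z⁆)}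

lemma Tmap_Vg {i j : Fin k} {x : Matrix (Fin (dv i)) (Fin (dv j)) F} (hx : x ∈ Vg F dv i j) :
    Tmap F dv i j x ∈ Vg F dv i j := by
  induction hx using Submodule.span_induction with
  | mem M hM =>
    obtain ⟨m, Z, hZ, rfl⟩ := hM
    refine Submodule.subset_span ⟨m + 1, Z, hZ, ?_⟩
    rw [pow_succ', Module.End.mul_apply]
  | zero => rw [map_zero]; exact zero_mem _
  | add y z _ _ hy hz => rw [map_add]; exact add_mem hy hz
  | smul c y _ hy => rw [map_smul]; exact Submodule.smul_mem _ _ hy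

lemma claim_lie_Xw (i j : Fin k) (l : ℕ) :
    ∀ Z ∈ hAlg F dv 0 0 (CanE F dv), blk dv i j ⁅Xw F dv l, Z⁆ ∈ Vg F dv i j := by
  induction l with
  | zero =>
    intro Z hZ
    exact Submodule.subset_span ⟨0, Z, hZ, by rw [pow_zero, Module.End.one_apply]; rfl⟩
  | succ l ih =>
    intro Z hZ
    rw [Xw_succ, lie_lie, blk_sub, blk_lie_D]
    have h1 : Jord (dv i) (0 : F) * blk dv i j ⁅Xw F dv l, Z⁆ -
        blk dv i j ⁅Xw F dv l, Z⁆ * Jord (dv j) (0 : F) =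
        Tmap F dv i j (blk dv i j ⁅Xw F dv l, Z⁆) := rfl
    rw [h1]
    exact sub_mem (Tmap_Vg (ih Z hZ))
      (ih _ (LieSubalgebra.lie_mem _ Dmat_mem_hAlg hZ))

lemma blk_mem_Vg (hdv : ∀ i, 0 < dv i) {i j : Fin k} (hij : (i : ℕ) + 2 ≤ (j : ℕ)) :
    ∀ X ∈ hAlg F dv 0 0 (CanE F dv), blk dv i j X ∈ Vg F dv i j := by
  intro X hX
  have hX' : X ∈ (Submodule.span F {Dmat dv (0 : F) 0} ⊔ NN F dv :
      Submodule F (Matrix (Fin (dtot dv)) (Fin (dtot dv)) F)) := hAlg_le_KK hX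
  obtain ⟨a, ha, b, hb, rfl⟩ := Submodule.mem_sup.mp hX'
  obtain ⟨c, rfl⟩ := Submodule.mem_span_singleton.mp ha
  have hne : i ≠ j := fun h => by omega
  rw [blk_add, blk_smul, blk_Dmat_ne hne, smul_zero, zero_add]
  clear hX hX'
  induction hb using Submodule.span_induction with
  | mem w hw =>
    cases hw with
    | gen l => rw [blk_Xw_ne hdv (by omega) l]; exact zero_mem _
    | pre l hw' => exact claim_lie_Xw i j l _ (word_mem_hAlg hw')
  | zero => rw [blk_zero]; exact zero_mem _
  | add y z _ _ hy hz => rw [blk_add]; exact add_mem hy hz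
  | smul c' y _ hy => rw [blk_smul]; exact Submodule.smul_mem _ _ hy

lemma blk_lie_E (hdv : ∀ i, 0 < dv i) {i j i1 j1 : Fin k}
    (h1 : (i1 : ℕ) = (i : ℕ) + 1) (h2 : (j1 : ℕ) + 1 = (j : ℕ))
    (Z : Matrix (Fin (dtot dv)) (Fin (dtot dv)) F) :
    blk dv i j ⁅CanE F dv, Z⁆ =
      blk dv i i1 (CanE F dv) * blk dv i1 j Z -
        blk dv i j1 Z * blk dv j1 j (CanE F dv) := by
  rw [Ring.lie_def, blk_sub, blk_mul, blk_mul]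
  congr 1
  · rw [Finset.sum_eq_single i1
      (fun t _ hne => by
        rw [blk_CanE_ne hdv (fun hv => hne (Fin.ext (by omega))), Matrix.zero_mul])
      (fun h => absurd (Finset.mem_univ _) h)]
  · rw [Finset.sum_eq_single j1
      (fun t _ hne => by
        rw [blk_CanE_ne hdv (fun hv => hne (Fin.ext (by omega))), Matrix.mul_zero])
      (fun h => absurd (Finset.mem_univ _) h)]

lemma rank_blk_CanE_le (hdv : ∀ i, 0 < dv i) {s t : Fin k} (h : (t : ℕ) = (s : ℕ) + 1) :
    (blk dv s t (CanE F dv)).rank ≤ 1 := by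
  have hfac : blk dv s t (CanE F dv) =
      (Matrix.of fun (r : Fin (dv s)) (_ : Fin 1) =>
        if (r : ℕ) = dv s - 1 then (1 : F) else 0) *
      (Matrix.of fun (_ : Fin 1) (u : Fin (dv t)) =>
        if (u : ℕ) = 0 then (1 : F) else 0) := by
    ext r u
    rw [blk_CanE_succ hdv h, Matrix.mul_apply]
    simp only [Matrix.of_apply, Finset.univ_unique, Finset.sum_singleton]
    by_cases h1 : (r : ℕ) = dv s - 1 <;> by_cases h2 : (u : ℕ) = 0 <;>
      simp [h1, h2]
  rw [hfac]
  exact le_trans (Matrix.rank_mul_le_left _ _)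
    (le_trans (Matrix.rank_le_card_width _) (by simp))

lemma rank_add_le' {m n : Type*} [Fintype m] [Fintype n]
    (A B : Matrix m n F) : (A + B).rank ≤ A.rank + B.rank := by
  rw [Matrix.rank, Matrix.rank, Matrix.rank, Matrix.mulVecLin_add]
  refine le_trans (Submodule.finrank_mono ?_)
    (Submodule.finrank_add_le_finrank_add_finrank _ _)
  rintro x ⟨v, rfl⟩
  exact Submodule.mem_sup.mpr ⟨A.mulVecLin v, ⟨v, rfl⟩, B.mulVecLin v, ⟨v, rfl⟩, rfl⟩

lemma rank_neg' {m n : Type*} [Fintype m] [Fintype n]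
    (A : Matrix m n F) : (-A).rank = A.rank := by
  have hneg : (-A).mulVecLin = -A.mulVecLin := by
    ext v
    simp [Matrix.mulVecLin_apply, Matrix.neg_mulVec]
  rw [Matrix.rank, Matrix.rank, hneg, LinearMap.range_neg]

lemma rank_eq_zero' {m n : Type*} [Fintype m] [Fintype n] [DecidableEq n]
    {A : Matrix m n F} (h : A.rank = 0) : A = 0 := by
  rw [Matrix.rank] at h
  have hb : LinearMap.range A.mulVecLin = ⊥ := Submodule.finrank_eq_zero.mp h
  have hz : A.mulVecLin = 0 := LinearMap.range_eq_bot.mp hb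
  ext r s
  have h2 : A.mulVecLin (Pi.single s 1) = 0 := by rw [hz]; rfl
  have h3 := congrFun h2 r
  rw [Matrix.mulVecLin_apply, Matrix.mulVec_single] at h3
  simpa using h3

end Core

/-- Proposition `prop.r012`:  `r_{i,j} ∈ {0,1,2}`; equivalently, if some member
of `h(0,0,C)` has nonzero `(i,j)`-block, then some member has a nonzero `(i,j)`-block of rank
at most `2`. -/
theorem statement6 {F : Type*} [Field F] [CharZero F] {k : ℕ} (hk : 2 ≤ k)
    (dv : Fin k → ℕ) (hdv : ∀ i, 0 < dv i) (i j : Fin k) (hij : i < j) :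
    (rr F dv i j = 0 ∨ rr F dv i j = 1 ∨ rr F dv i j = 2) ∧
    ((∃ X ∈ hAlg F dv 0 0 (CanE F dv), blk dv i j X ≠ 0) →
      ∃ X ∈ hAlg F dv 0 0 (CanE F dv), blk dv i j X ≠ 0 ∧ (blk dv i j X).rank ≤ 2) := by
  have hijv : (i : ℕ) < (j : ℕ) := hij
  have hjlt : (j : ℕ) < k := j.isLt
  have hmain : (∃ X ∈ hAlg F dv 0 0 (CanE F dv), blk dv i j X ≠ 0) →
      ∃ X ∈ hAlg F dv 0 0 (CanE F dv), blk dv i j X ≠ 0 ∧ (blk dv i j X).rank ≤ 2 := by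
    intro hex
    rcases Nat.lt_or_ge (j : ℕ) ((i : ℕ) + 2) with hcase | hcase
    · -- adjacent blocks:  `E(C)` itself works
      have hj : (j : ℕ) = (i : ℕ) + 1 := by omega
      refine ⟨CanE F dv, CanE_mem_hAlg, ?_, ?_⟩
      · intro h0
        have hr : dv i - 1 < dv i := by have := hdv i; omega
        have hev := congrFun (congrFun h0 ⟨dv i - 1, hr⟩) ⟨0, hdv j⟩
        rw [show blk dv i j (CanE F dv) ⟨dv i - 1, hr⟩ ⟨0, hdv j⟩ = _ from
          blk_CanE_succ hdv hj ⟨dv i - 1, hr⟩ ⟨0, hdv j⟩] at hev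
        simp at hev
      · exact le_trans (rank_blk_CanE_le hdv hj) one_le_two
    · -- distant blocks
      have hi1lt : (i : ℕ) + 1 < k := by omega
      have hj1lt : (j : ℕ) - 1 < k := by omega
      by_cases hU : ∀ Z ∈ hAlg F dv 0 0 (CanE F dv), blk dv i j ⁅CanE F dv, Z⁆ = 0
      · exfalso
        obtain ⟨X, hX, hXne⟩ := hex
        have hVg : Vg F dv i j ≤ ⊥ := by
          rw [Vg, Submodule.span_le]
          rintro M ⟨m, Z, hZ, rfl⟩
          rw [hU Z hZ, map_zero]
          exact Submodule.zero_mem _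
        exact hXne (by simpa using hVg (blk_mem_Vg hdv hcase X hX))
      · push_neg at hU
        obtain ⟨Z, hZ, hZne⟩ := hU
        refine ⟨⁅CanE F dv, Z⁆, LieSubalgebra.lie_mem _ CanE_mem_hAlg hZ, hZne, ?_⟩
        rw [blk_lie_E hdv (i1 := ⟨(i : ℕ) + 1, hi1lt⟩) (j1 := ⟨(j : ℕ) - 1, hj1lt⟩) rfl
          (show ((j : ℕ) - 1) + 1 = (j : ℕ) by omega) Z]
        rw [sub_eq_add_neg]
        refine le_trans (rank_add_le' _ _) ?_
        have r1 : (blk dv i ⟨(i : ℕ) + 1, hi1lt⟩ (CanE F dv) *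
            blk dv ⟨(i : ℕ) + 1, hi1lt⟩ j Z).rank ≤ 1 :=
          le_trans (Matrix.rank_mul_le_left _ _) (rank_blk_CanE_le hdv rfl)
        have r2 : (-(blk dv i ⟨(j : ℕ) - 1, hj1lt⟩ Z *
            blk dv ⟨(j : ℕ) - 1, hj1lt⟩ j (CanE F dv))).rank ≤ 1 := by
          rw [rank_neg']
          exact le_trans (Matrix.rank_mul_le_right _ _)
            (rank_blk_CanE_le hdv (show (j : ℕ) = ((j : ℕ) - 1) + 1 by omega))
        omega
  refine ⟨?_, hmain⟩
  rw [rr]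
  split_ifs with hall
  · exact Or.inl rfl
  · push_neg at hall
    obtain ⟨Y, hY, hYne, hYrle⟩ := hmain hall
    have hmem : (blk dv i j Y).rank ∈ {n | ∃ X ∈ hAlg F dv 0 0 (CanE F dv),
        blk dv i j X ≠ 0 ∧ (blk dv i j X).rank = n} := ⟨Y, hY, hYne, rfl⟩
    have h1 : sInf {n | ∃ X ∈ hAlg F dv 0 0 (CanE F dv),
        blk dv i j X ≠ 0 ∧ (blk dv i j X).rank = n} ≤ 2 :=
      le_trans (Nat.sInf_le hmem) hYrle
    obtain ⟨W, hW, hWne, hWr⟩ := Nat.sInf_mem (⟨_, hmem⟩ : Set.Nonempty _)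
    have h0 : sInf {n | ∃ X ∈ hAlg F dv 0 0 (CanE F dv),
        blk dv i j X ≠ 0 ∧ (blk dv i j X).rank = n} ≠ 0 := by
      rw [← hWr]
      intro hz
      exact hWne (rank_eq_zero' hz)
    omega


end Paper
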